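/- arXiv:1506.07758 — 2 statements merged into one kernel-verified Lean document; each statement's English description precedes it below -/
import Mathlib

section
/- Let M ≥ 2 be an integer and 0 < p ≤ 1. If a1, ..., aM are positive reals satisfying a_i^{p-1} · Σ_{j ≠ i} a_j^{p+1} = 1 for every i = 1, ..., M, then a_1 = a_2 = ... = a_M = (M-1)^{-1/(2p)}. -/
open Finset in
theorem symmetric_system_unique (M : ℕ) (hM : 2 ≤ M) (p : ℝ) (hp : 0 < p) (hp1 : p ≤ 1)
    (a : Fin M → ℝ) (ha : ∀ i, 0 < a i)
    (heq : ∀ i, a i ^ (p - 1) * ∑ j ∈ univ \ {i}, a j ^ (p + 1) = 1) :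
    ∀ i, a i = ((M : ℝ) - 1) ^ (-(1 / (2 * p))) := by
  have hM1 : (0:ℝ) < (M:ℝ) - 1 := by
    have : (2:ℝ) ≤ (M:ℝ) := by exact_mod_cast hM
    linarith
  set S := ∑ j, a j ^ (p + 1) with hS
  have hsum : ∀ i : Fin M, ∑ j ∈ univ \ {i}, a j ^ (p + 1) = S - a i ^ (p + 1) := by
    intro i
    rw [hS, Finset.sum_sdiff_eq_sub (Finset.subset_univ {i}), Finset.sum_singleton]
  have key : ∀ i j : Fin M, a i < a j → False := by
    intro i j hij
    have h1 := heq i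
    have h2 := heq j
    rw [hsum] at h1 h2
    have hposj : 0 < S - a j ^ (p + 1) := by
      have := h2
      nlinarith [Real.rpow_pos_of_pos (ha j) (p - 1), this]
    have hle : a j ^ (p - 1) ≤ a i ^ (p - 1) :=
      Real.rpow_le_rpow_of_nonpos (ha i) (le_of_lt hij) (by linarith)
    have hlt : a i ^ (p + 1) < a j ^ (p + 1) :=
      Real.rpow_lt_rpow (le_of_lt (ha i)) hij (by linarith)
    have hlt2 : S - a j ^ (p + 1) < S - a i ^ (p + 1) := by linarith
    have hposi : 0 < a i ^ (p - 1) := Real.rpow_pos_of_pos (ha i) _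
    have : a j ^ (p - 1) * (S - a j ^ (p + 1)) < a i ^ (p - 1) * (S - a i ^ (p + 1)) :=
      mul_lt_mul' hle hlt2 (le_of_lt hposj) hposi
    rw [h1, h2] at this
    exact lt_irrefl 1 this
  have hall : ∀ i j : Fin M, a i = a j := by
    intro i j
    rcases lt_trichotomy (a i) (a j) with h | h | h
    · exact absurd h (fun h => key i j h)
    · exact h
    · exact absurd h (fun h => key j i h)
  intro i
  set t := a i with ht
  have hti : 0 < t := ha i
  have hcard : (univ \ {i} : Finset (Fin M)).card = M - 1 := by
    rw [Finset.card_sdiff_of_subset (Finset.subset_univ _), Finset.card_singleton, Finset.card_univ,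
      Fintype.card_fin]
  have hsumeq : ∑ j ∈ univ \ {i}, a j ^ (p + 1) = ((M:ℝ) - 1) * t ^ (p + 1) := by
    rw [Finset.sum_congr rfl (fun j _ => by rw [hall j i])]
    rw [Finset.sum_const, hcard, nsmul_eq_mul]
    congr 1
    have : (1:ℕ) ≤ M := by omega
    push_cast [Nat.cast_sub this]
    ring
  have heqi := heq i
  rw [hsumeq, ← ht] at heqi
  have hmul : t ^ (p - 1) * t ^ (p + 1) = t ^ (2 * p) := by
    rw [← Real.rpow_add hti]; ring_nf
  have h2p : t ^ (2 * p) = ((M:ℝ) - 1)⁻¹ := by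
    have h : ((M:ℝ) - 1) * (t ^ (p - 1) * t ^ (p + 1)) = 1 := by
      linear_combination heqi
    rw [hmul, mul_comm] at h
    exact eq_inv_of_mul_eq_one_left h
  have h2pne : (2 * p) ≠ 0 := by positivity
  have hts : t = (t ^ (2 * p)) ^ ((2 * p)⁻¹) := by
    rw [← Real.rpow_mul (le_of_lt hti), mul_inv_cancel₀ h2pne, Real.rpow_one]
  rw [h2p] at hts
  rw [hts, ← Real.rpow_neg_one ((M:ℝ) - 1), ← Real.rpow_mul (le_of_lt hM1)]
  congr 1
  field_simp
end

section
/- Let a_1, ..., a_M be positive reals, 0 < p ≤ 1, and suppose a_i^{p-1} Σ_{j≠i} a_j^{p+1} = 1 for all i. If a_1 < a_2 and a_1 ≤ a_i for all i, then Σ_{j≠1} a_j^{p+1} > Σ_{j≠2} a_j^{p+1} while a_1^{1-p} ≤ a_2^{1-p}, a contradiction; hence no solution with two distinct values exists. -/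
open Finset in
theorem no_two_distinct_values (M : ℕ) (p : ℝ) (hp : 0 < p) (hp1 : p ≤ 1)
    (a : Fin M → ℝ) (ha : ∀ i, 0 < a i)
    (heq : ∀ i, a i ^ (p - 1) * ∑ j ∈ univ \ {i}, a j ^ (p + 1) = 1)
    (i₁ i₂ : Fin M) (hlt : a i₁ < a i₂) (hmin : ∀ i, a i₁ ≤ a i) : False := by
  have key : ∀ i, ∑ j ∈ univ \ {i}, a j ^ (p + 1) = a i ^ (1 - p) := by
    intro i
    have hpos : (0:ℝ) < a i ^ (p - 1) := Real.rpow_pos_of_pos (ha i) _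
    have h := heq i
    have : ∑ j ∈ univ \ {i}, a j ^ (p + 1) = (a i ^ (p - 1))⁻¹ := by
      field_simp at h ⊢; linarith
    rw [this, ← Real.rpow_neg (ha i).le]
    ring_nf
  have hsum : ∀ i : Fin M, ∑ j ∈ univ \ {i}, a j ^ (p + 1)
      = (∑ j, a j ^ (p + 1)) - a i ^ (p + 1) := by
    intro i
    rw [sum_sdiff_eq_sub (subset_univ {i}), sum_singleton]
  have h1 := key i₁
  have h2 := key i₂
  rw [hsum] at h1 h2
  have hlt2 : a i₁ ^ (p + 1) < a i₂ ^ (p + 1) :=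
    Real.rpow_lt_rpow (ha i₁).le hlt (by linarith)
  have hle : a i₁ ^ (1 - p) ≤ a i₂ ^ (1 - p) :=
    Real.rpow_le_rpow (ha i₁).le hlt.le (by linarith)
  linarith
end
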